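/- Let G be a finite simple graph, u a vertex of degree 2 with non-adjacent neighbors v and w. Let G' be the graph obtained by deleting u and merging v and w into a single new vertex adjacent to all former neighbors of v and of w (other than u). Then the maximum independent set size of G equals 1 plus the maximum independent set size of G'. -/

import Mathlib

open Finset

/-- The maximum size of an independent set of `G`. -/
noncomputable def indepNum {V : Type*} [Fintype V] (G : SimpleGraph V) : ℕ :=
  sSup {n | ∃ s : Finset V, (∀ u ∈ s, ∀ w ∈ s, ¬ G.Adj u w) ∧ s.card = n}

/-- The graph obtained from `G` by 2-elimination at a degree-2 vertex `u` with
non-adjacent neighbors `v` and `w`: delete `u` and merge `v` and `w` into a single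
vertex (represented by `v`), adjacent to all former neighbors of `v` and of `w`
other than `u`, `v`, `w`. -/
def twoElim {V : Type*} (G : SimpleGraph V) (u v w : V) :
    SimpleGraph {x : V // x ≠ u ∧ x ≠ w} where
  Adj a b :=
    ((a : V) ≠ v ∧ (b : V) ≠ v ∧ G.Adj a b) ∨
    ((a : V) = v ∧ (b : V) ≠ v ∧ (G.Adj v b ∨ G.Adj w b)) ∨
    ((b : V) = v ∧ (a : V) ≠ v ∧ (G.Adj v a ∨ G.Adj w a))
  symm := by
    constructor
    rintro a b (⟨h1, h2, h3⟩ | ⟨h1, h2, h3⟩ | ⟨h1, h2, h3⟩)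
    · exact Or.inl ⟨h2, h1, h3.symm⟩
    · exact Or.inr (Or.inr ⟨h1, h2, h3⟩)
    · exact Or.inr (Or.inl ⟨h1, h2, h3⟩)
  loopless := by
    constructor
    rintro a (⟨h1, h2, h3⟩ | ⟨h1, h2, h3⟩ | ⟨h1, h2, h3⟩)
    · exact G.irrefl h3
    · exact h2 h1
    · exact h2 h1

lemma indepSet_bddAbove {V : Type*} [Fintype V] (G : SimpleGraph V) :
    BddAbove {n | ∃ s : Finset V, (∀ u ∈ s, ∀ w ∈ s, ¬ G.Adj u w) ∧ s.card = n} := by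
  refine ⟨Fintype.card V, ?_⟩
  rintro n ⟨s, -, rfl⟩
  exact s.card_le_univ

lemma le_indepNum {V : Type*} [Fintype V] (G : SimpleGraph V) (s : Finset V)
    (hs : ∀ a ∈ s, ∀ b ∈ s, ¬ G.Adj a b) : s.card ≤ indepNum G :=
  le_csSup (indepSet_bddAbove G) ⟨s, hs, rfl⟩

lemma exists_indepNum {V : Type*} [Fintype V] (G : SimpleGraph V) :
    ∃ s : Finset V, (∀ a ∈ s, ∀ b ∈ s, ¬ G.Adj a b) ∧ s.card = indepNum G := by
  have hne : ({n | ∃ s : Finset V, (∀ u ∈ s, ∀ w ∈ s, ¬ G.Adj u w) ∧ s.card = n}).Nonempty :=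
    ⟨0, ∅, by simp, by simp⟩
  exact Nat.sSup_mem hne (indepSet_bddAbove G)

/-- 2-elimination: if `u` has degree 2 with non-adjacent neighbors `v` and `w`, then the
maximum independent set size of `G` equals 1 plus that of the graph obtained by deleting
`u` and merging `v` and `w`. -/
theorem degree_two_elimination {V : Type*} [Fintype V] [DecidableEq V]
    (G : SimpleGraph V) (u v w : V) (hvw : v ≠ w)
    (hN : G.neighborSet u = {v, w}) (hnadj : ¬ G.Adj v w) :
    indepNum G = 1 + indepNum (twoElim G u v w) := by
  classical
  have hadj : ∀ x, G.Adj u x ↔ x = v ∨ x = w := by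
    intro x
    rw [← SimpleGraph.mem_neighborSet, hN]
    simp [Set.mem_insert_iff]
  have huv : G.Adj u v := (hadj v).2 (Or.inl rfl)
  have huw : G.Adj u w := (hadj w).2 (Or.inr rfl)
  have huv' : u ≠ v := G.ne_of_adj huv
  have huw' : u ≠ w := G.ne_of_adj huw
  apply le_antisymm
  · -- α(G) ≤ 1 + α(G')
    obtain ⟨s, hs, hcard⟩ := exists_indepNum G
    rw [← hcard]
    by_cases hvws : v ∈ s ∧ w ∈ s
    · obtain ⟨hv, hw⟩ := hvws
      have hus : u ∉ s := fun hu => hs u hu v hv huv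
      set t := (s.erase w).subtype (fun x => x ≠ u ∧ x ≠ w) with ht
      have hmem : ∀ a : {x : V // x ≠ u ∧ x ≠ w}, a ∈ t → (a : V) ∈ s := by
        intro a ha
        rw [ht, Finset.mem_subtype] at ha
        exact Finset.mem_of_mem_erase ha
      have hcard' : t.card = s.card - 1 := by
        rw [ht, Finset.card_subtype, Finset.filter_true_of_mem, Finset.card_erase_of_mem hw]
        intro x hx
        exact ⟨fun h => hus (h ▸ Finset.mem_of_mem_erase hx), Finset.ne_of_mem_erase hx⟩
      have hind : ∀ a ∈ t, ∀ b ∈ t, ¬ (twoElim G u v w).Adj a b := by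
        intro a ha b hb hab
        have ha' : (a : V) ∈ s := hmem a ha
        have hb' : (b : V) ∈ s := hmem b hb
        rcases hab with ⟨_, _, h⟩ | ⟨h1, _, h⟩ | ⟨h1, _, h⟩
        · exact hs _ ha' _ hb' h
        · rcases h with h | h
          · exact hs v hv _ hb' h
          · exact hs w hw _ hb' h
        · rcases h with h | h
          · exact hs v hv _ ha' h
          · exact hs w hw _ ha' h
      have h1 := le_indepNum (twoElim G u v w) t hind
      have h2 : 1 ≤ s.card := Finset.card_pos.2 ⟨w, hw⟩
      omega
    · -- at most one of u, v, w is in s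
      have hI : (s ∩ ({u, v, w} : Finset V)).card ≤ 1 := by
        rw [Finset.card_le_one]
        intro a ha b hb
        simp only [Finset.mem_inter, Finset.mem_insert, Finset.mem_singleton] at ha hb
        obtain ⟨has, ha3⟩ := ha
        obtain ⟨hbs, hb3⟩ := hb
        rcases ha3 with rfl | rfl | rfl <;> rcases hb3 with rfl | rfl | rfl <;>
          first
          | rfl
          | exact absurd huv (hs _ has _ hbs)
          | exact absurd huw (hs _ has _ hbs)
          | exact absurd huv.symm (hs _ has _ hbs)
          | exact absurd huw.symm (hs _ has _ hbs)
          | exact (hvws ⟨has, hbs⟩).elim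
          | exact (hvws ⟨hbs, has⟩).elim
      have hsub : (s \ ({u, v, w} : Finset V)).card + (s ∩ ({u, v, w} : Finset V)).card = s.card :=
        Finset.card_sdiff_add_card_inter s _
      set t := (s \ ({u, v, w} : Finset V)).subtype (fun x => x ≠ u ∧ x ≠ w) with ht
      have hmem : ∀ a : {x : V // x ≠ u ∧ x ≠ w}, a ∈ t → (a : V) ∈ s ∧ (a : V) ≠ v := by
        intro a ha
        rw [ht, Finset.mem_subtype, Finset.mem_sdiff] at ha
        refine ⟨ha.1, fun h => ha.2 ?_⟩
        simp [h]
      have hcard' : t.card = (s \ ({u, v, w} : Finset V)).card := by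
        rw [ht, Finset.card_subtype, Finset.filter_true_of_mem]
        intro x hx
        rw [Finset.mem_sdiff] at hx
        constructor
        · intro h; exact hx.2 (by simp [h])
        · intro h; exact hx.2 (by simp [h])
      have hind : ∀ a ∈ t, ∀ b ∈ t, ¬ (twoElim G u v w).Adj a b := by
        intro a ha b hb hab
        obtain ⟨has, hav⟩ := hmem a ha
        obtain ⟨hbs, hbv⟩ := hmem b hb
        rcases hab with ⟨_, _, h⟩ | ⟨h1, _, _⟩ | ⟨h1, _, _⟩
        · exact hs _ has _ hbs h
        · exact hav h1
        · exact hbv h1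
      have h1 := le_indepNum (twoElim G u v w) t hind
      omega
  · -- 1 + α(G') ≤ α(G)
    obtain ⟨s', hs', hcard⟩ := exists_indepNum (twoElim G u v w)
    rw [← hcard]
    set T := s'.image Subtype.val with hT
    have hTcard : T.card = s'.card := Finset.card_image_of_injective _ Subtype.val_injective
    have hTmem : ∀ x ∈ T, x ≠ u ∧ x ≠ w := by
      intro x hx
      rw [hT, Finset.mem_image] at hx
      obtain ⟨a, _, rfl⟩ := hx
      exact a.2
    have H1 : ∀ a ∈ T, ∀ b ∈ T, ¬ G.Adj a b := by
      intro a ha b hb hab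
      rw [hT, Finset.mem_image] at ha hb
      obtain ⟨a', ha', rfl⟩ := ha
      obtain ⟨b', hb', rfl⟩ := hb
      by_cases hav : (a' : V) = v <;> by_cases hbv : (b' : V) = v
      · exact G.loopless.irrefl v (by rwa [hav, hbv] at hab)
      · exact hs' a' ha' b' hb' (Or.inr (Or.inl ⟨hav, hbv, Or.inl (by rwa [hav] at hab)⟩))
      · exact hs' a' ha' b' hb'
          (Or.inr (Or.inr ⟨hbv, hav, Or.inl (G.adj_symm (by rwa [hbv] at hab))⟩))
      · exact hs' a' ha' b' hb' (Or.inl ⟨hav, hbv, hab⟩)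
    by_cases hv : v ∈ T
    · -- the merged vertex is present; add w
      have H2 : ∀ b ∈ T, ¬ G.Adj w b := by
        intro b hb hwb
        rw [hT, Finset.mem_image] at hv hb
        obtain ⟨a', ha', hav⟩ := hv
        obtain ⟨b', hb', rfl⟩ := hb
        by_cases hbv : (b' : V) = v
        · exact hnadj (G.adj_symm (by rwa [hbv] at hwb))
        · exact hs' a' ha' b' hb' (Or.inr (Or.inl ⟨hav, hbv, Or.inr hwb⟩))
      have hwT : w ∉ T := fun h => (hTmem w h).2 rfl
      have hind : ∀ a ∈ insert w T, ∀ b ∈ insert w T, ¬ G.Adj a b := by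
        intro a ha b hb hab
        rcases Finset.mem_insert.1 ha with rfl | ha <;>
          rcases Finset.mem_insert.1 hb with rfl | hb
        · exact G.loopless.irrefl _ hab
        · exact H2 b hb hab
        · exact H2 a ha hab.symm
        · exact H1 a ha b hb hab
      have h1 := le_indepNum G (insert w T) hind
      rw [Finset.card_insert_of_notMem hwT, hTcard] at h1
      omega
    · -- the merged vertex is absent; add u
      have huT : u ∉ T := fun h => (hTmem u h).1 rfl
      have hind : ∀ a ∈ insert u T, ∀ b ∈ insert u T, ¬ G.Adj a b := by
        intro a ha b hb hab
        rcases Finset.mem_insert.1 ha with rfl | ha <;>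
          rcases Finset.mem_insert.1 hb with rfl | hb
        · exact G.loopless.irrefl _ hab
        · rcases (hadj b).1 hab with rfl | rfl
          · exact hv hb
          · exact (hTmem _ hb).2 rfl
        · rcases (hadj a).1 hab.symm with rfl | rfl
          · exact hv ha
          · exact (hTmem _ ha).2 rfl
        · exact H1 a ha b hb hab
      have h1 := le_indepNum G (insert u T) hind
      rw [Finset.card_insert_of_notMem huT, hTcard] at h1
      omega
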